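/- A metric space X has Property A if and only if for each δ > 0 there exist a set S and a (δ,δ)-Lipschitz map f: X → Δ(S) such that the family {f⁻¹(st(s)) : s ∈ S} is uniformly bounded. -/

import Mathlib

open Function Metric ENNReal

noncomputable section

/-- `ℓ¹(S)`: real-valued functions on `S` with finite `ℓ¹`-norm, with the `ℓ¹` metric. -/
abbrev ellOne (S : Type u) : Type u := lp (fun _ : S => ℝ) 1

/-- The full simplex `Δ(S) ⊆ ℓ¹(S)`. -/
def fullSimplex (S : Type u) : Set (ellOne S) :=
  {p | (∀ s, 0 ≤ p s) ∧ (support (p : S → ℝ)).Finite ∧ ∑' s, p s = 1}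

/-- The `n`-skeleton `Δ(S)^(n)` of the full simplex. -/
def skeleton (S : Type u) (n : ℕ) : Set (ellOne S) :=
  {p ∈ fullSimplex S | (support (p : S → ℝ)).encard ≤ n + 1}

/-- A simplicial complex on `S`: a subset of `Δ(S)` closed under passing to
points whose support is contained in the support of a member. -/
def IsSimplicialComplex {S : Type u} (K : Set (ellOne S)) : Prop :=
  K ⊆ fullSimplex S ∧
    ∀ p ∈ K, ∀ q ∈ fullSimplex S,
      support (q : S → ℝ) ⊆ support (p : S → ℝ) → q ∈ K

/-- The star of a vertex `v` in `K`. -/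
def star {S : Type u} (K : Set (ellOne S)) (v : S) : Set (ellOne S) :=
  {p ∈ K | 0 < p v}

/-- `f` is `(λ, C)`-Lipschitz. -/
def IsLipschitzLC {X Y : Type*} [MetricSpace X] [MetricSpace Y]
    (l C : ℝ) (f : X → Y) : Prop :=
  ∀ x y, dist (f x) (f y) ≤ l * dist x y + C

/-- A family of sets is uniformly bounded. -/
def UniformlyBounded {X : Type*} [MetricSpace X] {ι : Type*} (U : ι → Set X) : Prop :=
  ∃ M : ℝ, ∀ i, ∀ x ∈ U i, ∀ y ∈ U i, dist x y ≤ M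

/-- `U` is a cover of the whole space. -/
def IsCover {X : Type*} {ι : Type*} (U : ι → Set X) : Prop := ∀ x, ∃ i, x ∈ U i

/-- The Lebesgue number `inf_x sup_i dist(x, X∖Uᵢ)` of a family, as a value in `ℝ≥0∞`. -/
def lebesgue {X : Type*} [MetricSpace X] {ι : Type*} (U : ι → Set X) : ℝ≥0∞ :=
  ⨅ x : X, ⨆ i, EMetric.infEdist x (U i)ᶜ

/-- The multiplicity of `U` is at most `m`. -/
def MultiplicityLE {X : Type*} [MetricSpace X] {ι : Type*} (U : ι → Set X) (m : ℕ) : Prop :=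
  ∀ x : X, {i | 0 < Metric.infDist x ((U i)ᶜ)}.encard ≤ m

/-- `f : X → K` is a `δ`-partition of unity. -/
def IsDeltaPartitionOfUnity {X : Type*} [MetricSpace X] {S : Type u}
    (δ : ℝ) (K : Set (ellOne S)) (f : X → ellOne S) : Prop :=
  (∀ x, f x ∈ K) ∧ IsLipschitzLC δ δ f ∧
    UniformlyBounded (fun v : S => f ⁻¹' star K v) ∧
    ENNReal.ofReal (1 / δ) ≤ lebesgue (fun v : S => f ⁻¹' star K v)

/-- `X` is large scale paracompact. -/
def LSParacompact (X : Type u) [MetricSpace X] : Prop :=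
  ∀ (ι : Type u) (U : ι → Set X), IsCover U → UniformlyBounded U →
    ∀ l C : ℝ, 0 < l → 0 < C →
      ∃ (S : Type u) (K : Set (ellOne S)) (f : X → ellOne S),
        IsSimplicialComplex K ∧ (∀ x, f x ∈ K) ∧ IsLipschitzLC l C f ∧
        UniformlyBounded (fun v : S => f ⁻¹' star K v) ∧
        ∀ i, ∃ v : S, U i ⊆ f ⁻¹' star K v

/-- `X` has asymptotic dimension at most `n`. -/
def AsdimLE (X : Type u) [MetricSpace X] (n : ℕ) : Prop :=
  ∀ R : ℝ, 0 < R → ∃ (ι : Type u) (U : ι → Set X),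
    IsCover U ∧ UniformlyBounded U ∧ MultiplicityLE U (n + 1) ∧
    ENNReal.ofReal R ≤ lebesgue U

/-- `X` has Property A. -/
def PropertyA (X : Type u) [MetricSpace X] : Prop :=
  ∀ R ε : ℝ, 0 < R → 0 < ε →
    ∃ (M : ℝ) (S : Type u) (φ : S → X → ℝ), 0 < M ∧
      (∀ s x, 0 ≤ φ s x ∧ φ s x ≤ 1) ∧
      (∀ x, (support fun s => φ s x).Finite) ∧
      (∀ x, ∑' s, φ s x = 1) ∧
      (∀ x y, dist x y ≤ R → ∑' s, |φ s x - φ s y| < ε) ∧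
      (∀ s, ∀ x ∈ support (φ s), ∀ y ∈ support (φ s), dist x y ≤ M)

/-- `f` has `(R, ε)` variation. -/
def HasVariation {X Y : Type*} [MetricSpace X] [MetricSpace Y] (R ε : ℝ) (f : X → Y) : Prop :=
  ∀ x y, dist x y ≤ R → dist (f x) (f y) < ε

/-- `g` is a coarse embedding. -/
def CoarseEmbedding {X Y : Type*} [MetricSpace X] [MetricSpace Y] (g : X → Y) : Prop :=
  ∃ ρminus ρplus : ℝ → ℝ, Monotone ρminus ∧ Monotone ρplus ∧
    Filter.Tendsto ρminus Filter.atTop Filter.atTop ∧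
    ∀ x y, ρminus (dist x y) ≤ dist (g x) (g y) ∧ dist (g x) (g y) ≤ ρplus (dist x y)

/-- `X` has bounded geometry: balls of any fixed radius have uniformly bounded cardinality. -/
def BoundedGeometry (X : Type*) [MetricSpace X] : Prop :=
  ∀ r : ℝ, 0 < r → ∃ N : ℕ, ∀ x : X, (Metric.ball x r).encard ≤ N

lemma memℓp_one_of_finite {S : Type u} {g : S → ℝ} (hg : (support g).Finite) :
    Memℓp g 1 := by
  apply memℓp_gen
  apply summable_of_finite_support
  apply hg.subset
  intro s hs
  simp only [mem_support, ne_eq] at hs ⊢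
  intro h0
  simp [h0] at hs

/-- Package a finitely supported function as an element of `ℓ¹`. -/
def toEllOne {S : Type u} (g : S → ℝ) (hg : (support g).Finite) : ellOne S :=
  ⟨g, memℓp_one_of_finite hg⟩

@[simp] lemma coe_toEllOne {S : Type u} (g : S → ℝ) (hg : (support g).Finite) :
    ⇑(toEllOne g hg) = g := rfl

lemma ellOne_norm_eq {S : Type u} (p : ellOne S) : ‖p‖ = ∑' s, |p s| := by
  rw [lp.norm_eq_tsum_rpow (by norm_num) p]
  simp [Real.norm_eq_abs]

lemma ellOne_dist_eq {S : Type u} (p q : ellOne S) : dist p q = ∑' s, |p s - q s| := by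
  rw [dist_eq_norm, ellOne_norm_eq]
  exact tsum_congr fun s => by rw [lp.coeFn_sub]; rfl

lemma ellOne_norm_of_simplex {S : Type u} {p : ellOne S} (hp : p ∈ fullSimplex S) :
    ‖p‖ = 1 := by
  rw [ellOne_norm_eq]
  rw [show (∑' s, |p s|) = ∑' s, p s from tsum_congr fun s => abs_of_nonneg (hp.1 s)]
  exact hp.2.2

/-- `X` has Property A iff for each `δ > 0` there is a `(δ, δ)`-Lipschitz
map `f : X → Δ(S)` with `{f⁻¹(st s)}` uniformly bounded. -/
theorem propertyA_iff_deltaLipschitzMaps (X : Type u) [MetricSpace X] :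
    PropertyA X ↔
      ∀ δ : ℝ, 0 < δ → ∃ (S : Type u) (f : X → ellOne S),
        (∀ x, f x ∈ fullSimplex S) ∧ IsLipschitzLC δ δ f ∧
        UniformlyBounded (fun s : S => f ⁻¹' star (fullSimplex S) s) := by
  constructor
  · intro hA δ hδ
    obtain ⟨M, S, φ, hM, h01, hfin, hsum, hvar, hsupp⟩ := hA (2 / δ) δ (by positivity) hδ
    set f : X → ellOne S := fun x => toEllOne (fun s => φ s x) (hfin x) with hf
    have hfapp : ∀ x s, f x s = φ s x := fun x s => rfl
    have hmem : ∀ x, f x ∈ fullSimplex S := by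
      intro x
      refine ⟨fun s => (h01 s x).1, ?_, ?_⟩
      · exact hfin x
      · exact hsum x
    have hdist : ∀ x y, dist (f x) (f y) = ∑' s, |φ s x - φ s y| := by
      intro x y
      rw [ellOne_dist_eq]
      rfl
    refine ⟨S, f, hmem, ?_, ?_⟩
    · intro x y
      rcases le_or_gt (dist x y) (2 / δ) with hle | hgt
      · have := hvar x y hle
        rw [hdist]
        nlinarith [dist_nonneg (x := x) (y := y)]
      · have h2 : dist (f x) (f y) ≤ 2 := by
          calc dist (f x) (f y) = ‖f x - f y‖ := dist_eq_norm _ _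
            _ ≤ ‖f x‖ + ‖f y‖ := norm_sub_le _ _
            _ = 2 := by
                rw [ellOne_norm_of_simplex (hmem x), ellOne_norm_of_simplex (hmem y)]
                norm_num
        have h3 : 2 ≤ δ * dist x y := by
          have : 2 / δ ≤ dist x y := le_of_lt hgt
          calc (2 : ℝ) = δ * (2 / δ) := by field_simp
            _ ≤ δ * dist x y := by nlinarith
        nlinarith
    · refine ⟨M, fun s x hx y hy => ?_⟩
      have hxs : x ∈ support (φ s) := by
        simp only [Set.mem_preimage, _root_.star, Set.mem_setOf_eq] at hx
        have := hx.2
        rw [hfapp] at this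
        exact fun h0 => by simp [h0] at this
      have hys : y ∈ support (φ s) := by
        simp only [Set.mem_preimage, _root_.star, Set.mem_setOf_eq] at hy
        have := hy.2
        rw [hfapp] at this
        exact fun h0 => by simp [h0] at this
      exact hsupp s x hxs y hys
  · intro h R ε hR hε
    have hδ : 0 < ε / (2 * (R + 1)) := by positivity
    obtain ⟨S, f, hmem, hlip, M, hM⟩ := h (ε / (2 * (R + 1))) hδ
    refine ⟨max M 1, S, fun s x => f x s, lt_of_lt_of_le one_pos (le_max_right _ _),
      ?_, ?_, ?_, ?_, ?_⟩
    · intro s x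
      refine ⟨(hmem x).1 s, ?_⟩
      have hsummable : Summable (fun s => f x s) :=
        summable_of_finite_support (hmem x).2.1
      have := hsummable.le_tsum s (fun t _ => (hmem x).1 t)
      rwa [(hmem x).2.2] at this
    · intro x
      exact (hmem x).2.1
    · intro x
      exact (hmem x).2.2
    · intro x y hxy
      have h1 : (∑' s, |f x s - f y s|) = dist (f x) (f y) := (ellOne_dist_eq _ _).symm
      rw [h1]
      have h2 := hlip x y
      have h3 : ε / (2 * (R + 1)) * dist x y + ε / (2 * (R + 1))
          ≤ ε / (2 * (R + 1)) * (R + 1) := by nlinarith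
      have h4 : ε / (2 * (R + 1)) * (R + 1) = ε / 2 := by field_simp
      linarith
    · intro s x hx y hy
      have hxP : x ∈ f ⁻¹' _root_.star (fullSimplex S) s := by
        refine ⟨hmem x, ?_⟩
        exact lt_of_le_of_ne ((hmem x).1 s) (Ne.symm hx)
      have hyP : y ∈ f ⁻¹' _root_.star (fullSimplex S) s := by
        refine ⟨hmem y, ?_⟩
        exact lt_of_le_of_ne ((hmem y).1 s) (Ne.symm hy)
      exact le_trans (hM s x hxP y hyP) (le_max_left _ _)

end
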